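/- For every integer n ≥ 0, every real N > 0 and every real X, the relativistic Hermite polynomial has the moment representation H_n^N(X) = ((2N)_n/N^{n/2}) · ∫_{-1}^{1} (X/√N + i z)^n · f^{(N)}(z) dz. -/

import Mathlib

open Finset Polynomial MeasureTheory Set intervalIntegral

lemma gamma_asc {x : ℝ} (hx : 0 < x) (k : ℕ) :
    Real.Gamma (x + k) = Real.Gamma x * (ascPochhammer ℝ k).eval x := by
  induction k with
  | zero => simp
  | succ k ih =>
    have hxk : (0:ℝ) < x + k := by positivity
    have : (x + (k+1:ℕ) : ℝ) = (x + k) + 1 := by push_cast; ring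
    rw [this, Real.Gamma_add_one (ne_of_gt hxk), ih, ascPochhammer_succ_eval]
    ring

lemma asc_half (k : ℕ) :
    (ascPochhammer ℝ k).eval (1/2) * 4 ^ k * (k.factorial : ℝ) = ((2*k).factorial : ℝ) := by
  induction k with
  | zero => simp
  | succ k ih =>
    rw [ascPochhammer_succ_eval]
    have h2 : 2 * (k+1) = (2*k+1) + 1 := by ring
    rw [h2, Nat.factorial_succ, Nat.factorial_succ, Nat.factorial_succ]
    push_cast
    linear_combination (4*(1/2+(k:ℝ))*((k:ℝ)+1)) * ih

lemma realBeta {u v : ℝ} (hu : 0 < u) (hv : 0 < v) :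
    ∫ x in (0:ℝ)..1, x ^ (u-1) * (1-x) ^ (v-1) =
      Real.Gamma u * Real.Gamma v / Real.Gamma (u+v) := by
  have key : Complex.Gamma u * Complex.Gamma v
      = Complex.Gamma (u+v) * Complex.betaIntegral u v := by
    have := Complex.Gamma_mul_Gamma_eq_betaIntegral (s := (u:ℂ)) (t := (v:ℂ))
      (by simpa using hu) (by simpa using hv)
    simpa using this
  have hbeta : Complex.betaIntegral u v
      = ((∫ x in (0:ℝ)..1, x ^ (u-1) * (1-x) ^ (v-1) : ℝ) : ℂ) := by
    rw [Complex.betaIntegral, ← intervalIntegral.integral_ofReal]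
    apply intervalIntegral.integral_congr
    intro x hx
    rw [Set.uIcc_of_le (by norm_num : (0:ℝ) ≤ 1)] at hx
    push_cast
    rw [Complex.ofReal_cpow hx.1, Complex.ofReal_cpow (by linarith [hx.2] : (0:ℝ) ≤ 1 - x)]
    push_cast
    ring
  have hG : Real.Gamma (u+v) ≠ 0 := (Real.Gamma_pos_of_pos (by linarith)).ne'
  rw [hbeta, Complex.Gamma_ofReal, Complex.Gamma_ofReal, ← Complex.ofReal_add,
    Complex.Gamma_ofReal] at key
  have : ((Real.Gamma u * Real.Gamma v : ℝ) : ℂ)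
      = ((Real.Gamma (u+v) * ∫ x in (0:ℝ)..1, x ^ (u-1) * (1-x) ^ (v-1) : ℝ) : ℂ) := by
    push_cast; exact key
  field_simp
  have := Complex.ofReal_inj.mp this
  linarith [this]


lemma II_congr_eqOn {f g : ℝ → ℝ} {a b : ℝ} (hf : IntervalIntegrable f volume a b)
    (h : Set.EqOn f g (Set.uIcc a b)) : IntervalIntegrable g volume a b :=
  hf.congr_ae ((ae_restrict_mem measurableSet_uIoc).mono fun x hx => h (uIoc_subset_uIcc hx))

lemma contOn_oneSub_rpow {q c d : ℝ} (hd : d < 1) :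
    ContinuousOn (fun x : ℝ => (1-x) ^ q) (Set.uIcc c d) → True := fun _ => trivial

lemma betaIntegrand_intble {p q : ℝ} (hp : -1 < p) (hq : -1 < q) :
    IntervalIntegrable (fun x : ℝ => x ^ p * (1-x) ^ q) volume 0 1 := by
  have h1 : IntervalIntegrable (fun x : ℝ => x ^ p * (1-x) ^ q) volume 0 (1/2) := by
    refine (intervalIntegrable_rpow' hp).mul_continuousOn ?_
    refine ContinuousOn.rpow_const (by fun_prop) fun x hx => Or.inl ?_
    rw [Set.uIcc_of_le (by norm_num : (0:ℝ) ≤ 1/2)] at hx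
    have := hx.2; intro h; linarith [sub_eq_zero.mp h]
  have h2 : IntervalIntegrable (fun x : ℝ => x ^ p * (1-x) ^ q) volume (1/2) 1 := by
    have base : IntervalIntegrable (fun x : ℝ => (1-x) ^ q) volume 1 (1/2) := by
      have := (intervalIntegrable_rpow' hq (a := 0) (b := 1/2)).comp_sub_left 1
      norm_num at this; exact this
    refine (base.symm).continuousOn_mul ?_
    refine ContinuousOn.rpow_const (by fun_prop) fun x hx => Or.inl ?_
    rw [Set.uIcc_of_le (by norm_num : (1:ℝ)/2 ≤ 1)] at hx
    have := hx.1; positivity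
  exact h1.trans h2

lemma oneSubSq_intble_right {q : ℝ} (hq : -1 < q) :
    IntervalIntegrable (fun z : ℝ => (1-z^2) ^ q) volume 0 1 := by
  have base : IntervalIntegrable (fun z : ℝ => (1-z) ^ q) volume 0 1 := by
    have := (intervalIntegrable_rpow' hq (a := 0) (b := 1)).comp_sub_left 1
    norm_num at this; exact this.symm
  have h1 : IntervalIntegrable (fun z : ℝ => (1-z) ^ q * (1+z) ^ q) volume 0 1 := by
    refine base.mul_continuousOn ?_
    refine ContinuousOn.rpow_const (by fun_prop) fun x hx => Or.inl ?_
    rw [Set.uIcc_of_le (by norm_num : (0:ℝ) ≤ 1)] at hx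
    have := hx.1; positivity
  refine II_congr_eqOn h1 fun z hz => ?_
  rw [Set.uIcc_of_le (by norm_num : (0:ℝ) ≤ 1)] at hz
  rw [← Real.mul_rpow (by linarith [hz.2]) (by linarith [hz.1])]
  ring_nf

lemma oneSubSq_intble_left {q : ℝ} (hq : -1 < q) :
    IntervalIntegrable (fun z : ℝ => (1-z^2) ^ q) volume (-1) 0 := by
  have base : IntervalIntegrable (fun z : ℝ => (1+z) ^ q) volume (-1) 0 := by
    have := (intervalIntegrable_rpow' hq (a := 0) (b := 1)).comp_add_right 1
    norm_num at this
    have e : ∀ x : ℝ, x + 1 = 1 + x := fun x => by ring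
    simpa [e] using this
  have h1 : IntervalIntegrable (fun z : ℝ => (1+z) ^ q * (1-z) ^ q) volume (-1) 0 := by
    refine base.mul_continuousOn ?_
    refine ContinuousOn.rpow_const (by fun_prop) fun x hx => Or.inl ?_
    rw [Set.uIcc_of_le (by norm_num : (-1:ℝ) ≤ 0)] at hx
    have := hx.2; intro h; nlinarith [sub_eq_zero.mp h]
  refine II_congr_eqOn h1 fun z hz => ?_
  rw [Set.uIcc_of_le (by norm_num : (-1:ℝ) ≤ 0)] at hz
  rw [← Real.mul_rpow (by linarith [hz.1]) (by linarith [hz.2])]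
  ring_nf

lemma oneSubSq_intble {q : ℝ} (hq : -1 < q) :
    IntervalIntegrable (fun z : ℝ => (1-z^2) ^ q) volume (-1) 1 :=
  (oneSubSq_intble_left hq).trans (oneSubSq_intble_right hq)

lemma moment_half {q : ℝ} (hq : -1 < q) (k : ℕ) :
    ∫ z in (0:ℝ)..1, z ^ (2*k) * (1-z^2) ^ q
      = (1/2) * ∫ x in (0:ℝ)..1, x ^ ((k:ℝ) - 1/2) * (1-x) ^ q := by
  set g : ℝ → ℝ := fun x => x ^ ((k:ℝ)-1/2) * (1-x) ^ q with hg
  have hkhalf : (-1:ℝ) < (k:ℝ) - 1/2 := by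
    have : (0:ℝ) ≤ (k:ℝ) := Nat.cast_nonneg k
    linarith
  have hIIg : IntervalIntegrable g volume 0 1 := betaIntegrand_intble hkhalf hq
  have hmono : IntervalIntegrable (fun z : ℝ => z ^ (2*k) * (1-z^2) ^ q) volume 0 1 :=
    (oneSubSq_intble_right hq).continuousOn_mul (continuous_pow (2*k)).continuousOn
  have key : ∀ z ∈ Set.Ioc (0:ℝ) 1, (2*z) • (g (z^2)) = 2 * (z ^ (2*k) * (1-z^2) ^ q) := by
    intro z hz
    have hz0 : (0:ℝ) < z := hz.1
    have e1 : (z^2 : ℝ) ^ ((k:ℝ)-1/2) = z ^ (2*((k:ℝ)-1/2)) := by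
      rw [← Real.rpow_natCast z 2, ← Real.rpow_mul hz0.le]
      norm_num
    have e2 : z * z ^ (2*((k:ℝ)-1/2)) = z ^ (2*k) := by
      have h1 : z * z ^ (2*((k:ℝ)-1/2)) = z ^ ((1:ℝ) + 2*((k:ℝ)-1/2)) := by
        rw [Real.rpow_add hz0, Real.rpow_one]
      rw [h1, ← Real.rpow_natCast z (2*k)]
      congr 1
      push_cast
      ring
    simp only [hg, smul_eq_mul, e1]
    rw [← e2]; ring
  have hII2 : IntervalIntegrable (fun z : ℝ => (2*z) • (g (z^2))) volume 0 1 := by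
    refine (hmono.const_mul 2).congr_ae ?_
    refine (ae_restrict_mem measurableSet_uIoc).mono fun z hz => ?_
    rw [Set.uIoc_of_le (by norm_num : (0:ℝ) ≤ 1)] at hz
    exact (key z hz).symm
  have himg1 : (fun z : ℝ => z^2) '' Set.Ioo (min 0 1) (max 0 1) ⊆ Set.Ioo (0:ℝ) 1 := by
    rintro y ⟨x, hx, rfl⟩
    rw [min_eq_left (by norm_num : (0:ℝ) ≤ 1), max_eq_right (by norm_num : (0:ℝ) ≤ 1)] at hx
    show x^2 ∈ Set.Ioo (0:ℝ) 1
    exact ⟨pow_pos hx.1 2, by nlinarith [hx.1, hx.2]⟩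
  have himg2 : (fun z : ℝ => z^2) '' Set.uIcc 0 1 ⊆ Set.uIcc (0:ℝ) 1 := by
    rintro y ⟨x, hx, rfl⟩
    rw [Set.uIcc_of_le (by norm_num : (0:ℝ) ≤ 1)] at hx ⊢
    show x^2 ∈ Set.Icc (0:ℝ) 1
    exact ⟨by positivity, by nlinarith [hx.1, hx.2]⟩
  have hgcont : ContinuousOn g (Set.Ioo (0:ℝ) 1) := by
    refine ContinuousOn.mul ?_ ?_
    · exact ContinuousOn.rpow_const continuousOn_id fun x hx => Or.inl hx.1.ne'
    · refine ContinuousOn.rpow_const (by fun_prop) fun x hx => Or.inl ?_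
      have := hx.2; intro h; linarith [sub_eq_zero.mp h]
  have sub := intervalIntegral.integral_comp_smul_deriv''' (a := 0) (b := 1)
    (f := fun z => z^2) (f' := fun z => 2*z) (g := g)
    ((continuous_pow 2).continuousOn)
    (fun x _ => by
      simpa using (hasDerivAt_pow 2 x).hasDerivWithinAt)
    (hgcont.mono himg1)
    (((intervalIntegrable_iff' (h := enorm_ne_top)).mp hIIg).mono_set himg2)
    ((intervalIntegrable_iff' (h := enorm_ne_top)).mp hII2)
  norm_num at sub
  have lhs2 : ∫ z in (0:ℝ)..1, 2*z * (g (z^2)) = 2 * ∫ z in (0:ℝ)..1, z ^ (2*k) * (1-z^2) ^ q := by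
    rw [← intervalIntegral.integral_const_mul]
    refine intervalIntegral.integral_congr_ae (Filter.Eventually.of_forall fun z hz => ?_)
    rw [Set.uIoc_of_le (by norm_num : (0:ℝ) ≤ 1)] at hz
    simpa using key z hz
  rw [lhs2] at sub
  linarith [sub]

lemma moment_sym {q : ℝ} (hq : -1 < q) (k : ℕ) :
    ∫ z in (-1:ℝ)..1, z ^ (2*k) * (1-z^2) ^ q
      = 2 * ∫ z in (0:ℝ)..1, z ^ (2*k) * (1-z^2) ^ q := by
  have hL : IntervalIntegrable (fun z : ℝ => z ^ (2*k) * (1-z^2) ^ q) volume (-1) 0 :=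
    (oneSubSq_intble_left hq).continuousOn_mul (continuous_pow (2*k)).continuousOn
  have hR : IntervalIntegrable (fun z : ℝ => z ^ (2*k) * (1-z^2) ^ q) volume 0 1 :=
    (oneSubSq_intble_right hq).continuousOn_mul (continuous_pow (2*k)).continuousOn
  rw [← intervalIntegral.integral_add_adjacent_intervals hL hR]
  have : ∫ z in (-1:ℝ)..0, z ^ (2*k) * (1-z^2) ^ q
      = ∫ z in (0:ℝ)..1, z ^ (2*k) * (1-z^2) ^ q := by
    have := intervalIntegral.integral_comp_neg (a := 0) (b := 1)
      (fun z : ℝ => z ^ (2*k) * (1-z^2) ^ q)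
    rw [neg_zero] at this
    rw [← this]
    refine intervalIntegral.integral_congr fun z _ => ?_
    simp [pow_mul, neg_pow]
  rw [this]; ring

lemma moment_odd {q : ℝ} (hq : -1 < q) (j : ℕ) (hj : Odd j) :
    ∫ z in (-1:ℝ)..1, z ^ j * (1-z^2) ^ q = 0 := by
  have hI : IntervalIntegrable (fun z : ℝ => z ^ j * (1-z^2) ^ q) volume (-1) 1 :=
    (oneSubSq_intble hq).continuousOn_mul (continuous_pow j).continuousOn
  have h1 := intervalIntegral.integral_comp_neg (a := -1) (b := 1)
    (fun z : ℝ => z ^ j * (1-z^2) ^ q)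
  rw [neg_neg] at h1
  norm_num at h1
  have h2 : ∫ z in (-1:ℝ)..1, (-z) ^ j * (1-z^2) ^ q
      = - ∫ z in (-1:ℝ)..1, z ^ j * (1-z^2) ^ q := by
    rw [← intervalIntegral.integral_neg]
    refine intervalIntegral.integral_congr fun z _ => ?_
    rw [hj.neg_pow]
    ring_nf
  rw [h2] at h1
  linarith

lemma moment_val {N : ℝ} (hN : 0 < N) (k : ℕ) :
    ∫ z in (-1:ℝ)..1, z ^ (2*k) * (1-z^2) ^ (N-1)
      = Real.Gamma ((k:ℝ)+1/2) * Real.Gamma N / Real.Gamma (N+k+1/2) := by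
  have hq : (-1:ℝ) < N - 1 := by linarith
  rw [moment_sym hq, moment_half hq]
  have hb := realBeta (u := (k:ℝ)+1/2) (v := N) (by positivity) hN
  have e : ((k:ℝ)+1/2) - 1 = (k:ℝ) - 1/2 := by ring
  rw [e] at hb
  rw [hb]
  rw [show (k:ℝ)+1/2+N = N+k+1/2 by ring]
  ring

/-- The relativistic Hermite polynomial `H_n^N(X)` (real parameter `N > 0`). -/
noncomputable def RH (n : ℕ) (N X : ℝ) : ℝ :=
  ((ascPochhammer ℝ n).eval (2 * N) / (2 * Real.sqrt N) ^ n) *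
    ∑ k ∈ Finset.range (n / 2 + 1),
      (-1) ^ k / (ascPochhammer ℝ k).eval (N + 1 / 2) *
        ((n.factorial : ℝ) / (((n - 2 * k).factorial : ℝ) * (k.factorial : ℝ))) *
        (2 * X / Real.sqrt N) ^ (n - 2 * k)

/-- The symmetric Student-r density
`f^(N)(z) = (Γ(N+1/2)/(Γ(N)Γ(1/2))) (1-z²)^(N-1)` on `[-1,1]`. -/
noncomputable def studentPdf (N z : ℝ) : ℝ :=
  if -1 ≤ z ∧ z ≤ 1 then
    Real.Gamma (N + 1 / 2) / (Real.Gamma N * Real.Gamma (1 / 2)) * (1 - z ^ 2) ^ (N - 1)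
  else 0

lemma pdf_intble {N : ℝ} (hN : 0 < N) :
    IntervalIntegrable (studentPdf N) volume (-1) 1 := by
  refine II_congr_eqOn (((oneSubSq_intble (q := N-1) (by linarith)).const_mul
    (Real.Gamma (N + 1 / 2) / (Real.Gamma N * Real.Gamma (1 / 2))))) fun z hz => ?_
  rw [Set.uIcc_of_le (by norm_num : (-1:ℝ) ≤ 1)] at hz
  rw [studentPdf, if_pos ⟨hz.1, hz.2⟩]

lemma momj {N : ℝ} (hN : 0 < N) (j : ℕ) :
    ∫ z in (-1:ℝ)..1, z ^ j * studentPdf N z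
      = Real.Gamma (N + 1 / 2) / (Real.Gamma N * Real.Gamma (1 / 2)) *
          ∫ z in (-1:ℝ)..1, z ^ j * (1-z^2) ^ (N-1) := by
  rw [← intervalIntegral.integral_const_mul]
  refine intervalIntegral.integral_congr fun z hz => ?_
  rw [Set.uIcc_of_le (by norm_num : (-1:ℝ) ≤ 1)] at hz
  rw [studentPdf, if_pos ⟨hz.1, hz.2⟩]
  ring

lemma mom_even {N : ℝ} (hN : 0 < N) (k : ℕ) :
    ∫ z in (-1:ℝ)..1, z ^ (2*k) * studentPdf N z
      = (ascPochhammer ℝ k).eval (1/2) / (ascPochhammer ℝ k).eval (N + 1/2) := by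
  rw [momj hN, moment_val hN k]
  have g1 : Real.Gamma ((k:ℝ)+1/2) = Real.Gamma (1/2) * (ascPochhammer ℝ k).eval (1/2) := by
    rw [show (k:ℝ)+1/2 = 1/2 + k by ring]; exact gamma_asc (by norm_num) k
  have g2 : Real.Gamma (N+(k:ℝ)+1/2)
      = Real.Gamma (N+1/2) * (ascPochhammer ℝ k).eval (N+1/2) := by
    rw [show N+(k:ℝ)+1/2 = (N+1/2) + k by ring]; exact gamma_asc (by linarith) k
  rw [g1, g2]
  have p1 : 0 < Real.Gamma N := Real.Gamma_pos_of_pos hN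
  have p2 : 0 < Real.Gamma (1/2) := Real.Gamma_pos_of_pos (by norm_num)
  have p3 : 0 < Real.Gamma (N+1/2) := Real.Gamma_pos_of_pos (by linarith)
  have p4 : 0 < (ascPochhammer ℝ k).eval (N+1/2) :=
    ascPochhammer_pos k _ (by linarith)
  have key : ∀ (A B C H Q : ℝ), A ≠ 0 → B ≠ 0 → C ≠ 0 → Q ≠ 0 →
      A/(B*C) * (C*H*B/(A*Q)) = H/Q := by
    intros A B C H Q hA hB hC hQ
    field_simp
  exact key _ _ _ _ _ p3.ne' p1.ne' p2.ne' p4.ne'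

lemma mom_odd {N : ℝ} (hN : 0 < N) {j : ℕ} (hj : Odd j) :
    ∫ z in (-1:ℝ)..1, z ^ j * studentPdf N z = 0 := by
  rw [momj hN, moment_odd (by linarith) j hj, mul_zero]

lemma sqrt_pow_eq {N : ℝ} (hN : 0 < N) (n : ℕ) :
    Real.sqrt N ^ n = N ^ ((n:ℝ)/2) := by
  rw [Real.sqrt_eq_rpow, ← Real.rpow_natCast (N ^ ((1:ℝ)/2)) n, ← Real.rpow_mul hN.le]
  congr 1
  push_cast
  ring

lemma final_real (n : ℕ) {N : ℝ} (hN : 0 < N) (X : ℝ) :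
    RH n N X = ((ascPochhammer ℝ n).eval (2*N) / N ^ ((n:ℝ)/2)) *
      ∑ k ∈ Finset.range (n/2+1), (-1:ℝ)^k * (X / Real.sqrt N)^(n-2*k) * (n.choose (2*k) : ℝ) *
        ((ascPochhammer ℝ k).eval (1/2) / (ascPochhammer ℝ k).eval (N+1/2)) := by
  rw [RH, Finset.mul_sum, Finset.mul_sum]
  refine Finset.sum_congr rfl fun k hk => ?_
  rw [Finset.mem_range] at hk
  have h2k : 2*k ≤ n := by omega
  have hsN : 0 < Real.sqrt N := Real.sqrt_pos.mpr hN
  set P := (ascPochhammer ℝ n).eval (2*N) with hP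
  set Hk := (ascPochhammer ℝ k).eval (1/2:ℝ) with hHk
  set Qk := (ascPochhammer ℝ k).eval (N+1/2) with hQk
  set C := (n.choose (2*k) : ℝ) with hC0
  set T := N ^ ((n:ℝ)/2) with hT
  have hTpos : 0 < T := Real.rpow_pos_of_pos hN _
  have hQpos : 0 < Qk := ascPochhammer_pos k _ (by linarith)
  have h4 : (4:ℝ)^k = 2^(2*k) := by rw [show (4:ℝ) = 2^2 by norm_num, ← pow_mul]
  have h2 : (2:ℝ)^(n-2*k) * 4^k = 2^n := by
    rw [h4, ← pow_add]
    congr 1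
    omega
  have hH : Hk * 4^k * (k.factorial : ℝ) = ((2*k).factorial : ℝ) := asc_half k
  have hCfact : C * ((2*k).factorial : ℝ) * (((n-2*k).factorial : ℝ)) = (n.factorial : ℝ) := by
    rw [hC0]
    have := Nat.choose_mul_factorial_mul_factorial h2k
    push_cast [← this]
    ring
  have key : (n.factorial : ℝ) * 2^(n-2*k)
      = C * Hk * (k.factorial : ℝ) * ((n-2*k).factorial : ℝ) * 2^n := by
    linear_combination (-(2:ℝ)^(n-2*k)) * hCfact
      - C * ((n-2*k).factorial : ℝ) * (2:ℝ)^(n-2*k) * hH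
      + C * Hk * (k.factorial : ℝ) * ((n-2*k).factorial : ℝ) * h2
  have e1 : (2 * X / Real.sqrt N)^(n-2*k) = 2^(n-2*k) * (X / Real.sqrt N)^(n-2*k) := by
    rw [mul_div_assoc, mul_pow]
  have e2 : (2 * Real.sqrt N)^n = 2^n * T := by
    rw [mul_pow, sqrt_pow_eq hN]
  rw [e1, e2]
  set b := (X / Real.sqrt N)^(n-2*k) with hb
  have hf1 : (((n-2*k).factorial : ℕ) : ℝ) ≠ 0 := Nat.cast_ne_zero.mpr (Nat.factorial_ne_zero _)
  have hf2 : ((k.factorial : ℕ) : ℝ) ≠ 0 := Nat.cast_ne_zero.mpr (Nat.factorial_ne_zero _)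
  have h2n : (2:ℝ)^n ≠ 0 := by positivity
  field_simp
  linear_combination (P * b) * key

/-- Moment representation:
`H_n^N(X) = ((2N)_n / N^(n/2)) ∫_{-1}^1 (X/√N + i z)^n f^(N)(z) dz`. -/
theorem RH_moment_representation (n : ℕ) (N : ℝ) (hN : 0 < N) (X : ℝ) :
    (RH n N X : ℂ) =
      (((ascPochhammer ℝ n).eval (2 * N) / N ^ ((n : ℝ) / 2) : ℝ) : ℂ) *
        ∫ z in (-1 : ℝ)..1,
          (((X / Real.sqrt N : ℝ) : ℂ) + Complex.I * (z : ℂ)) ^ n * ((studentPdf N z : ℝ) : ℂ) := by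
  have hpdf := pdf_intble hN
  have hpdfj : ∀ j : ℕ, IntervalIntegrable (fun z : ℝ => z ^ j * studentPdf N z) volume (-1) 1 :=
    fun j => hpdf.continuousOn_mul (continuous_pow j).continuousOn
  have hIj : ∀ j : ℕ,
      IntervalIntegrable (fun z : ℝ => ((z ^ j * studentPdf N z : ℝ) : ℂ)) volume (-1) 1 :=
    fun j => ⟨(hpdfj j).1.ofReal, (hpdfj j).2.ofReal⟩
  set a : ℝ := X / Real.sqrt N with ha
  have expand : ∀ z : ℝ,
      (((X / Real.sqrt N : ℝ) : ℂ) + Complex.I * (z:ℂ)) ^ n * ((studentPdf N z : ℝ) : ℂ)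
      = ∑ j ∈ Finset.range (n+1),
          (Complex.I ^ j * ((a : ℝ) : ℂ) ^ (n-j) * (n.choose j : ℂ))
            * ((z ^ j * studentPdf N z : ℝ) : ℂ) := by
    intro z
    rw [← ha, add_comm, add_pow, Finset.sum_mul]
    refine Finset.sum_congr rfl fun j _ => ?_
    push_cast
    ring
  have hint : (∫ z in (-1:ℝ)..1,
        (((X / Real.sqrt N:ℝ):ℂ) + Complex.I * (z:ℂ)) ^ n * ((studentPdf N z : ℝ):ℂ))
      = ∑ j ∈ Finset.range (n+1), (Complex.I ^ j * ((a:ℝ):ℂ) ^ (n-j) * (n.choose j : ℂ))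
          * ((∫ z in (-1:ℝ)..1, z ^ j * studentPdf N z : ℝ) : ℂ) := by
    rw [intervalIntegral.integral_congr (fun z _ => expand z),
      intervalIntegral.integral_finset_sum (fun j _ => (hIj j).const_mul _)]
    refine Finset.sum_congr rfl fun j _ => ?_
    rw [intervalIntegral.integral_const_mul, intervalIntegral.integral_ofReal]
  set F : ℕ → ℂ := fun j => (Complex.I ^ j * ((a:ℝ):ℂ) ^ (n-j) * (n.choose j : ℂ))
      * ((∫ z in (-1:ℝ)..1, z ^ j * studentPdf N z : ℝ) : ℂ) with hF
  have hodd : ∀ j, Odd j → F j = 0 := by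
    intro j hj
    simp [hF, mom_odd hN hj]
  have hsum : ∑ j ∈ Finset.range (n+1), F j = ∑ k ∈ Finset.range (n/2+1), F (2*k) := by
    rw [← Finset.sum_filter_of_ne (p := fun j => Even j) (fun x _ hx => by
      rcases Nat.even_or_odd x with h | h
      · exact h
      · exact absurd (hodd x h) hx)]
    refine (Finset.sum_nbij' (i := fun k => 2*k) (j := fun j => j/2) ?_ ?_ ?_ ?_ ?_).symm
    · intro k hk
      simp only [Finset.mem_filter, Finset.mem_range] at *
      exact ⟨by omega, even_two_mul k⟩
    · intro j hj
      simp only [Finset.mem_filter, Finset.mem_range] at *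
      omega
    · intro k _
      show 2*k/2 = k
      omega
    · intro j hj
      simp only [Finset.mem_filter, Finset.mem_range] at hj
      obtain ⟨r, rfl⟩ := hj.2
      show 2*((r+r)/2) = r + r
      omega
    · intro k _
      rfl
  have hFval : ∀ k ∈ Finset.range (n/2+1), F (2*k)
      = ((((-1:ℝ)^k * a^(n-2*k) * (n.choose (2*k) : ℝ) *
          ((ascPochhammer ℝ k).eval (1/2) / (ascPochhammer ℝ k).eval (N+1/2))) : ℝ) : ℂ) := by
    intro k _
    rw [hF]
    simp only []
    rw [mom_even hN k, pow_mul, Complex.I_sq]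
    push_cast
    ring
  rw [hint, hsum, Finset.sum_congr rfl hFval, ← Complex.ofReal_sum, ← Complex.ofReal_mul,
    Complex.ofReal_inj]
  rw [final_real n hN X]
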